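/- Admissibility of regression-based cost: in the abstract regression setting, if a state s reachable from s₀ in k steps satisfies ψ, then h(ψ) ≤ k, where h is the regression-based distance (h(ψ)=0 if s₀ ⊨ ψ, otherwise 1 plus the minimum over one-step regressions). -/
import Mathlib

/-- Regression sequences. -/
inductive RegSeq {Φ : Type*} (Rg : Φ → Φ → Prop) : Φ → ℕ → Φ → Prop
  | refl (ψ : Φ) : RegSeq Rg ψ 0 ψ
  | step {ψ ψ' ψ'' : Φ} {n : ℕ} : Rg ψ ψ' → RegSeq Rg ψ' n ψ'' → RegSeq Rg ψ (n + 1) ψ''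

/-- The regression-based distance. -/
noncomputable def regH {S Φ : Type*} (Rg : Φ → Φ → Prop) (sat : S → Φ → Prop)
    (s0 : S) (ψ : Φ) : ℕ∞ :=
  sInf {m : ℕ∞ | ∃ (n : ℕ) (ψ' : Φ), RegSeq Rg ψ n ψ' ∧ sat s0 ψ' ∧ m = (n : ℕ∞)}

/-- `k`-step reachability. -/
inductive StepN {S : Type*} (step : S → S → Prop) : S → ℕ → S → Prop
  | refl (s : S) : StepN step s 0 s
  | tail {s s' s'' : S} {n : ℕ} : StepN step s n s' → step s' s'' → StepN step s (n + 1) s''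

lemma regseq_exists {S Φ : Type*} (step : S → S → Prop) (s0 : S)
    (sat : S → Φ → Prop) (Rg : Φ → Φ → Prop)
    (hreg : ∀ s s' ψ, step s s' → sat s' ψ → ∃ ψ', Rg ψ ψ' ∧ sat s ψ')
    (s : S) (k : ℕ) (hk : StepN step s0 k s) :
    ∀ ψ, sat s ψ → ∃ n ≤ k, ∃ ψ', RegSeq Rg ψ n ψ' ∧ sat s0 ψ' := by
  induction hk with
  | refl => intro ψ hψ; exact ⟨0, le_rfl, ψ, RegSeq.refl ψ, hψ⟩
  | tail h hstep ih =>
    intro ψ hψ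
    obtain ⟨ψ₁, hRg, hsat⟩ := hreg _ _ _ hstep hψ
    obtain ⟨m, hm, ψ₂, hseq, hs0⟩ := ih ψ₁ hsat
    exact ⟨m + 1, Nat.succ_le_succ hm, ψ₂, RegSeq.step hRg hseq, hs0⟩

/-- Admissibility: if a state `s` reachable from `s0` in `k` steps satisfies `ψ`, then
the regression-based distance of `ψ` is at most `k`. -/
theorem stmt_14 {S Φ : Type*} (step : S → S → Prop) (s0 : S)
    (sat : S → Φ → Prop) (Rg : Φ → Φ → Prop)
    (hreg : ∀ s s' ψ, step s s' → sat s' ψ → ∃ ψ', Rg ψ ψ' ∧ sat s ψ')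
    (s : S) (k : ℕ) (hk : StepN step s0 k s) (ψ : Φ) (hs : sat s ψ) :
    regH Rg sat s0 ψ ≤ (k : ℕ∞) := by
  obtain ⟨n, hn, ψ', hseq, hs0⟩ := regseq_exists step s0 sat Rg hreg s k hk ψ hs
  calc regH Rg sat s0 ψ ≤ (n : ℕ∞) := sInf_le ⟨n, ψ', hseq, hs0, rfl⟩
    _ ≤ (k : ℕ∞) := by exact_mod_cast hn
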